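/- arXiv:2411.18517 — 2 statements merged into one kernel-verified Lean document; each statement's English description precedes it below -/
import Mathlib

section
/- The 2n(2n−1)/2 matrices {γ_aγ_b : 1 ≤ a < b ≤ 2n} are linearly independent over ℂ, their complex span is a Lie subalgebra of the 2^n×2^n complex matrices under the commutator bracket, and the linear map determined by γ_aγ_b ↦ 2(E_{ab} − E_{ba}) (where E_{ab} is the 2n×2n matrix unit) is a Lie algebra isomorphism from this span onto the Lie algebra of antisymmetric complex 2n×2n matrices equipped with the commutator bracket. -/
open scoped Matrix ComplexOrder

namespace DG

noncomputable section

/-- 2×2 Pauli matrices -/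
def PX : Matrix (Fin 2) (Fin 2) ℂ := !![0, 1; 1, 0]
def PY : Matrix (Fin 2) (Fin 2) ℂ := !![0, -Complex.I; Complex.I, 0]
def PZ : Matrix (Fin 2) (Fin 2) ℂ := !![1, 0; 0, -1]

/-- Kronecker (tensor) product of `n` 2×2 matrices, as a matrix indexed by `Fin n → Fin 2`. -/
def tensor {n : ℕ} (f : Fin n → Matrix (Fin 2) (Fin 2) ℂ) :
    Matrix (Fin n → Fin 2) (Fin n → Fin 2) ℂ :=
  Matrix.of fun x y => ∏ i, f i (x i) (y i)

/-- Majorana operators on `n` qubits via Jordan–Wigner (0-based indexing: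
`γ (2j) = Z^{⊗j} ⊗ X ⊗ I`, `γ (2j+1) = Z^{⊗j} ⊗ Y ⊗ I`). -/
def γ (n : ℕ) (j : Fin (2 * n)) : Matrix (Fin n → Fin 2) (Fin n → Fin 2) ℂ :=
  tensor fun i =>
    if i.val < j.val / 2 then PZ
    else if i.val = j.val / 2 then (if j.val % 2 = 0 then PX else PY)
    else 1

/-- Ordered (increasing) product `γ_J` over a finite index set `J`. -/
def γProd (n : ℕ) (J : Finset (Fin (2 * n))) :
    Matrix (Fin n → Fin 2) (Fin n → Fin 2) ℂ :=
  ((J.sort (· ≤ ·)).map (γ n)).prod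

/-- Moments `A_J = Tr(γ_J† A)`. -/
def moment (n : ℕ) (A : Matrix (Fin n → Fin 2) (Fin n → Fin 2) ℂ)
    (J : Finset (Fin (2 * n))) : ℂ :=
  Matrix.trace ((γProd n J)ᴴ * A)

/-- The Grassmann algebra on `2n` anticommuting generators. -/
abbrev Grass (n : ℕ) := ExteriorAlgebra ℂ (Fin (2 * n) → ℂ)

/-- Grassmann generators. -/
def η (n : ℕ) (j : Fin (2 * n)) : Grass n :=
  ExteriorAlgebra.ι ℂ (Pi.single j 1)

/-- Ordered product `η_J`. -/
def ηProd (n : ℕ) (J : Finset (Fin (2 * n))) : Grass n :=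
  ((J.sort (· ≤ ·)).map (η n)).prod

/-- Fourier (Grassmann) transform `Ξ_A = Σ_J A_J η_J`. -/
def Xi (n : ℕ) (A : Matrix (Fin n → Fin 2) (Fin n → Fin 2) ℂ) : Grass n :=
  ∑ J : Finset (Fin (2 * n)), moment n A J • ηProd n J

/-- Exponential in the Grassmann algebra as a finite power series. -/
def gExp (n : ℕ) (x : Grass n) : Grass n :=
  ∑ k ∈ Finset.range (2 * n + 1), ((k.factorial : ℂ))⁻¹ • x ^ k

/-- The Gaussian exponent `(i/2) Σ M_{jk} η_j η_k + Σ d_j η_j`. -/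
def gaussArg (n : ℕ) (M : Matrix (Fin (2 * n)) (Fin (2 * n)) ℝ) (d : Fin (2 * n) → ℝ) :
    Grass n :=
  (Complex.I / 2) • ∑ j, ∑ k, (M j k : ℂ) • (η n j * η n k) + ∑ j, (d j : ℂ) • η n j

/-- `ρ` is a displaced Gaussian state (Fourier characterization). -/
def IsDisplacedGaussian (n : ℕ) (ρ : Matrix (Fin n → Fin 2) (Fin n → Fin 2) ℂ) : Prop :=
  ∃ (M : Matrix (Fin (2 * n)) (Fin (2 * n)) ℝ) (d : Fin (2 * n) → ℝ),
    Mᵀ = -M ∧ Xi n ρ = gExp n (gaussArg n M d)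

/-- `ρ` is an even Gaussian state (Fourier characterization with zero mean). -/
def IsEvenGaussian (n : ℕ) (ρ : Matrix (Fin n → Fin 2) (Fin n → Fin 2) ℂ) : Prop :=
  ∃ (M : Matrix (Fin (2 * n)) (Fin (2 * n)) ℝ),
    Mᵀ = -M ∧ Xi n ρ = gExp n (gaussArg n M 0)

/-- Mean vector `μ(ρ)_j = Tr(γ_j ρ)`. -/
def meanVec (n : ℕ) (ρ : Matrix (Fin n → Fin 2) (Fin n → Fin 2) ℂ) (j : Fin (2 * n)) : ℂ :=
  Matrix.trace (γ n j * ρ)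

/-- Antisymmetric covariance matrix: `Σ(ρ)_{jk} = Tr((γ_jγ_k)† ρ)` for `j < k`. -/
def covMat (n : ℕ) (ρ : Matrix (Fin n → Fin 2) (Fin n → Fin 2) ℂ) :
    Matrix (Fin (2 * n)) (Fin (2 * n)) ℂ :=
  Matrix.of fun j k =>
    if j < k then Matrix.trace ((γ n j * γ n k)ᴴ * ρ)
    else if k < j then -Matrix.trace ((γ n k * γ n j)ᴴ * ρ)
    else 0

/-- The block matrix `[[M, i·d], [−i·dᵀ, 0]]`. -/
def extBlock {m : ℕ} (M : Matrix (Fin m) (Fin m) ℂ) (d : Fin m → ℂ) :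
    Matrix (Fin (m + 1)) (Fin (m + 1)) ℂ :=
  Matrix.of fun a b =>
    if ha : a.val < m then
      (if hb : b.val < m then M ⟨a, ha⟩ ⟨b, hb⟩ else Complex.I * d ⟨a, ha⟩)
    else (if hb : b.val < m then -(Complex.I * d ⟨b, hb⟩) else 0)

/-- Extended covariance matrix `Σ̃(ρ) = [[Σ(ρ), i·μ(ρ)], [−i·μ(ρ)ᵀ, 0]]`. -/
def extCov (n : ℕ) (ρ : Matrix (Fin n → Fin 2) (Fin n → Fin 2) ℂ) :
    Matrix (Fin (2 * n + 1)) (Fin (2 * n + 1)) ℂ :=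
  extBlock (covMat n ρ) (meanVec n ρ)

/-- Displaced quadratic Hamiltonian exponent
`(1/2) Σ h_{jk} γ_j γ_k + i Σ d_j γ_j`. -/
def quadArg (n : ℕ) (h : Matrix (Fin (2 * n)) (Fin (2 * n)) ℝ) (d : Fin (2 * n) → ℝ) :
    Matrix (Fin n → Fin 2) (Fin n → Fin 2) ℂ :=
  (1 / 2 : ℂ) • ∑ j, ∑ k, (h j k : ℂ) • (γ n j * γ n k)
    + Complex.I • ∑ j, (d j : ℂ) • γ n j

/-- The displaced Gaussian unitary `U = exp((1/2) Σ h_{jk} γ_jγ_k + i Σ d_j γ_j)`. -/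
def dgUnitary (n : ℕ) (h : Matrix (Fin (2 * n)) (Fin (2 * n)) ℝ) (d : Fin (2 * n) → ℝ) :
    Matrix (Fin n → Fin 2) (Fin n → Fin 2) ℂ :=
  NormedSpace.exp (quadArg n h d)

/-- The real block matrix `[[h, −d], [dᵀ, 0]]`. -/
def extBlockR {m : ℕ} (h : Matrix (Fin m) (Fin m) ℝ) (d : Fin m → ℝ) :
    Matrix (Fin (m + 1)) (Fin (m + 1)) ℝ :=
  Matrix.of fun a b =>
    if ha : a.val < m then
      (if hb : b.val < m then h ⟨a, ha⟩ ⟨b, hb⟩ else -d ⟨a, ha⟩)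
    else (if hb : b.val < m then d ⟨b, hb⟩ else 0)

/-- The rotation `R(h,d) = exp(2·[[h, −d], [dᵀ, 0]]) ∈ SO(2n+1, ℝ)`. -/
def Rmat (n : ℕ) (h : Matrix (Fin (2 * n)) (Fin (2 * n)) ℝ) (d : Fin (2 * n) → ℝ) :
    Matrix (Fin (2 * n + 1)) (Fin (2 * n + 1)) ℝ :=
  NormedSpace.exp ((2 : ℝ) • extBlockR h d)

/-- The Pfaffian of a `k × k` matrix (zero if `k` is odd; 1 for the empty matrix). -/
def pf {k : ℕ} (B : Matrix (Fin k) (Fin k) ℂ) : ℂ :=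
  if h : k % 2 = 0 then
    ((2 : ℂ) ^ (k / 2) * ((k / 2).factorial : ℂ))⁻¹ *
      ∑ σ : Equiv.Perm (Fin k), (Equiv.Perm.sign σ : ℂ) *
        ∏ l : Fin (k / 2),
          B (σ ⟨2 * l.val, by have := l.isLt; omega⟩)
            (σ ⟨2 * l.val + 1, by have := l.isLt; omega⟩)
  else 0

/-- Restriction `B|_J` of a matrix to the rows and columns indexed by `J` (in order). -/
def restr {N : ℕ} (B : Matrix (Fin N) (Fin N) ℂ) (J : Finset (Fin N)) :
    Matrix (Fin J.card) (Fin J.card) ℂ :=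
  B.submatrix (J.orderEmbOfFin rfl) (J.orderEmbOfFin rfl)

/-- `J̃ = J` if `|J|` even, `J ∪ {2n+1}` if `|J|` odd. -/
def tilde {n : ℕ} (J : Finset (Fin (2 * n))) : Finset (Fin (2 * n + 1)) :=
  if Odd J.card then insert (Fin.last (2 * n)) (J.map Fin.castSuccEmb)
  else J.map Fin.castSuccEmb

end

end DG
namespace DG
noncomputable section

/-- The quadratic polynomial `(1/2) Σ M_{jk} γ_jγ_k + Σ v_j γ_j` (complex coefficients). -/
def quadPolyC (n : ℕ) (M : Matrix (Fin (2 * n)) (Fin (2 * n)) ℂ) (v : Fin (2 * n) → ℂ) :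
    Matrix (Fin n → Fin 2) (Fin n → Fin 2) ℂ :=
  (1 / 2 : ℂ) • ∑ j, ∑ k, M j k • (γ n j * γ n k) + ∑ j, v j • γ n j

/-- The Hermitian quadratic Hamiltonian `H = (i/2) Σ h_{jk} γ_jγ_k + Σ d_j γ_j`. -/
def hamil (n : ℕ) (h : Matrix (Fin (2 * n)) (Fin (2 * n)) ℝ) (d : Fin (2 * n) → ℝ) :
    Matrix (Fin n → Fin 2) (Fin n → Fin 2) ℂ :=
  (Complex.I / 2) • ∑ j, ∑ k, (h j k : ℂ) • (γ n j * γ n k) + ∑ j, (d j : ℂ) • γ n j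

/-- The diagonalized Gaussian state `⊗_j (I + λ_j Z)/2`. -/
def diagGauss (n : ℕ) (l : Fin n → ℝ) : Matrix (Fin n → Fin 2) (Fin n → Fin 2) ℂ :=
  tensor fun j => (2 : ℂ)⁻¹ • (1 + (l j : ℂ) • PZ)

/-- The Pauli `Z` acting on line `j`: `Z_j = I^{⊗(j-1)} ⊗ Z ⊗ I^{⊗(n-j)}`. -/
def Zline (n : ℕ) (j : Fin n) : Matrix (Fin n → Fin 2) (Fin n → Fin 2) ℂ :=
  tensor fun i => if i = j then PZ else 1

/-- Measurement projector `O(K,x) = Π_{j ∈ K} (I + (−1)^{x_j} Z_j)/2`. -/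
def measOp (n : ℕ) (K : Finset (Fin n)) (x : Fin n → Bool) :
    Matrix (Fin n → Fin 2) (Fin n → Fin 2) ℂ :=
  ((K.sort (· ≤ ·)).map
    (fun j => (2 : ℂ)⁻¹ • (1 + (if x j then (-1 : ℂ) else 1) • Zline n j))).prod

/-- Tensoring a 2×2 matrix on a new last qubit line: `A ⊗ u`. -/
def extQ {n : ℕ} (A : Matrix (Fin n → Fin 2) (Fin n → Fin 2) ℂ)
    (u : Matrix (Fin 2) (Fin 2) ℂ) :
    Matrix (Fin (n + 1) → Fin 2) (Fin (n + 1) → Fin 2) ℂ :=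
  Matrix.of fun a b =>
    A (fun i => a i.castSucc) (fun i => b i.castSucc) * u (a (Fin.last n)) (b (Fin.last n))

/-- The state `|+⟩⟨+|`. -/
def plusState : Matrix (Fin 2) (Fin 2) ℂ := (2 : ℂ)⁻¹ • !![1, 1; 1, 1]

/-- The extended antisymmetric generator `h̃` of the even embedding of a displaced
Gaussian unitary. -/
def htilde {n : ℕ} (h : Matrix (Fin (2 * n)) (Fin (2 * n)) ℝ) (d : Fin (2 * n) → ℝ) :
    Matrix (Fin (2 * (n + 1))) (Fin (2 * (n + 1))) ℝ :=
  Matrix.of fun j k =>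
    if hj : j.val < 2 * n then
      (if hk : k.val < 2 * n then h ⟨j, hj⟩ ⟨k, hk⟩
       else if k.val = 2 * n + 1 then -d ⟨j, hj⟩ else 0)
    else if j.val = 2 * n + 1 then (if hk : k.val < 2 * n then d ⟨k, hk⟩ else 0) else 0

/-- The embedding unitary `V = exp(−i (π/4) γ_{2n+2})` on `n+1` qubits. -/
def embedV (n : ℕ) : Matrix (Fin (n + 1) → Fin 2) (Fin (n + 1) → Fin 2) ℂ :=
  NormedSpace.exp ((-(Real.pi / 4 : ℝ) * Complex.I) • γ (n + 1) ⟨2 * n + 1, by omega⟩)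

end
end DG
namespace DG
noncomputable section
open scoped Matrix

lemma tensor_mul {n : ℕ} (f g : Fin n → Matrix (Fin 2) (Fin 2) ℂ) :
    tensor f * tensor g = tensor (fun i => f i * g i) := by
  ext x y
  simp only [tensor, Matrix.mul_apply, Matrix.of_apply]
  rw [Finset.prod_univ_sum, ← Fintype.piFinset_univ]
  exact Finset.sum_congr rfl fun z _ => (Finset.prod_mul_distrib).symm

lemma tensor_one {n : ℕ} : tensor (fun _ : Fin n => (1 : Matrix (Fin 2) (Fin 2) ℂ)) = 1 := by
  ext x y
  simp only [tensor, Matrix.of_apply]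
  by_cases h : x = y
  · subst h; simp [Matrix.one_apply]
  · rw [Matrix.one_apply_ne h]
    obtain ⟨i, hi⟩ := Function.ne_iff.mp h
    exact Finset.prod_eq_zero (Finset.mem_univ i) (by simp [Matrix.one_apply, hi])

lemma PX_sq : PX * PX = 1 := by
  ext i j; fin_cases i <;> fin_cases j <;>
    simp [PX, Matrix.mul_apply, Fin.sum_univ_two, Matrix.one_apply]
lemma PY_sq : PY * PY = 1 := by
  ext i j; fin_cases i <;> fin_cases j <;>
    simp [PY, Matrix.mul_apply, Fin.sum_univ_two, Matrix.one_apply, Complex.I_mul_I]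
lemma PZ_sq : PZ * PZ = 1 := by
  ext i j; fin_cases i <;> fin_cases j <;>
    simp [PZ, Matrix.mul_apply, Fin.sum_univ_two, Matrix.one_apply]
lemma PXZ : PX * PZ = -(PZ * PX) := by
  ext i j; fin_cases i <;> fin_cases j <;>
    simp [PX, PZ, Matrix.mul_apply, Fin.sum_univ_two]
lemma PYZ : PY * PZ = -(PZ * PY) := by
  ext i j; fin_cases i <;> fin_cases j <;>
    simp [PY, PZ, Matrix.mul_apply, Fin.sum_univ_two]
lemma PXY : PX * PY = -(PY * PX) := by
  ext i j; fin_cases i <;> fin_cases j <;>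
    simp [PX, PY, Matrix.mul_apply, Fin.sum_univ_two]

/-- the i-th Jordan-Wigner factor of γ j -/
def jwf {m : ℕ} (j : ℕ) (i : Fin m) : Matrix (Fin 2) (Fin 2) ℂ :=
  if i.val < j / 2 then PZ
  else if i.val = j / 2 then (if j % 2 = 0 then PX else PY)
  else 1

lemma gamma_eq {n : ℕ} (j : Fin (2 * n)) : γ n j = tensor (fun i => jwf j.val i) := rfl

lemma gamma_sq {n : ℕ} (j : Fin (2 * n)) : γ n j * γ n j = 1 := by
  rw [gamma_eq, tensor_mul]
  have : (fun i : Fin n => jwf j.val i * jwf j.val i) = fun _ => 1 := by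
    funext i
    unfold jwf
    split_ifs <;> simp [PX_sq, PY_sq, PZ_sq]
  rw [this, tensor_one]

lemma gamma_anticomm_lt {n : ℕ} {j k : Fin (2 * n)} (h : j.val < k.val) :
    γ n j * γ n k = -(γ n k * γ n j) := by
  rw [gamma_eq, gamma_eq, tensor_mul, tensor_mul]
  have hp : j.val / 2 < n := by omega
  have key : ∀ i : Fin n, jwf j.val i * jwf k.val i
      = (if i.val = j.val / 2 then (-1 : ℂ) else 1) • (jwf k.val i * jwf j.val i) := by
    intro i
    unfold jwf
    rcases lt_trichotomy (i.val) (j.val / 2) with hi | hi | hi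
    · have h2 : i.val < k.val / 2 := by omega
      rw [if_pos hi, if_pos h2, if_neg (show ¬ i.val = j.val / 2 by omega), one_smul]
    · rcases Nat.lt_or_ge (j.val / 2) (k.val / 2) with hq | hq
      · rw [if_neg (show ¬ i.val < j.val / 2 by omega), if_pos hi,
          if_pos (show i.val < k.val / 2 by omega), if_pos hi]
        split_ifs <;> simp [PXZ, PYZ]
      · have hq' : j.val / 2 = k.val / 2 := by omega
        rw [if_neg (show ¬ i.val < j.val / 2 by omega), if_pos hi,
          if_neg (show ¬ i.val < k.val / 2 by omega),
          if_pos (show i.val = k.val / 2 by omega), if_pos hi,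
          if_pos (show j.val % 2 = 0 by omega),
          if_neg (show ¬ k.val % 2 = 0 by omega)]
        simp [PXY]
    · rw [if_neg (show ¬ i.val < j.val / 2 by omega),
        if_neg (show ¬ i.val = j.val / 2 by omega), mul_one, one_mul,
        if_neg (show ¬ i.val = j.val / 2 by omega), one_smul]
  ext x y
  simp only [tensor, Matrix.of_apply, Matrix.neg_apply]
  have : ∀ i : Fin n, (jwf j.val i * jwf k.val i) (x i) (y i)
      = (if i.val = j.val / 2 then (-1 : ℂ) else 1) * (jwf k.val i * jwf j.val i) (x i) (y i) := by
    intro i; rw [key i]; simp [Matrix.smul_apply]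
  simp_rw [this]
  rw [Finset.prod_mul_distrib]
  have sign : ∏ i : Fin n, (if i.val = j.val / 2 then (-1 : ℂ) else 1) = -1 := by
    have : ∀ i : Fin n, (if i.val = j.val / 2 then (-1 : ℂ) else 1)
        = if i = ⟨j.val / 2, hp⟩ then (-1 : ℂ) else 1 := by
      intro i; congr 1; simp [Fin.ext_iff]
    simp_rw [this]
    simp [Finset.prod_ite_eq']
  rw [sign]; ring

lemma gamma_anticomm {n : ℕ} {j k : Fin (2 * n)} (h : j ≠ k) :
    γ n j * γ n k = -(γ n k * γ n j) := by
  rcases lt_or_gt_of_ne (Fin.val_ne_of_ne h) with h' | h'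
  · exact gamma_anticomm_lt h'
  · rw [gamma_anticomm_lt h']; exact (neg_neg _).symm


lemma trace_one_pow {n : ℕ} :
    Matrix.trace (1 : Matrix (Fin n → Fin 2) (Fin n → Fin 2) ℂ) = (2 : ℂ) ^ n := by
  rw [Matrix.trace_one]
  simp [Fintype.card_fun]

lemma trace_gamma_pair {n : ℕ} {j k : Fin (2 * n)} (h : j ≠ k) :
    Matrix.trace (γ n j * γ n k) = 0 := by
  have h1 : Matrix.trace (γ n j * γ n k) = -Matrix.trace (γ n k * γ n j) := by
    rw [gamma_anticomm h, Matrix.trace_neg]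
  rw [Matrix.trace_mul_comm] at h1
  rw [Matrix.trace_mul_comm]
  exact CharZero.eq_neg_self_iff.mp h1

lemma tr_two {n : ℕ} {x y : Fin (2 * n)} (h : x ≠ y) :
    Matrix.trace (γ n x * γ n y) = 0 := trace_gamma_pair h

lemma trace_pairing {n : ℕ} {j k a b : Fin (2 * n)} (hjk : j ≠ k) (hab : a ≠ b) :
    Matrix.trace (γ n k * γ n j * (γ n a * γ n b)) =
      if j = a ∧ k = b then (2 : ℂ) ^ n
      else if j = b ∧ k = a then -(2 : ℂ) ^ n else 0 := by
  by_cases hja : j = a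
  · subst hja
    by_cases hkb : k = b
    · subst hkb
      rw [if_pos ⟨rfl, rfl⟩]
      have : γ n k * γ n j * (γ n j * γ n k) = 1 := by
        rw [show γ n k * γ n j * (γ n j * γ n k) = γ n k * (γ n j * γ n j) * γ n k from by
          noncomm_ring, gamma_sq, mul_one, gamma_sq]
      rw [this, trace_one_pow]
    · rw [if_neg (fun hc => hkb hc.2), if_neg (fun hc => hab hc.1)]
      have : γ n k * γ n j * (γ n j * γ n b) = γ n k * γ n b := by
        rw [show γ n k * γ n j * (γ n j * γ n b) = γ n k * (γ n j * γ n j) * γ n b from by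
          noncomm_ring, gamma_sq, mul_one]
      rw [this]; exact tr_two hkb
  · by_cases hjb : j = b
    · subst hjb
      by_cases hka : k = a
      · subst hka
        rw [if_neg (fun hc => hjk hc.1), if_pos ⟨rfl, rfl⟩]
        have : γ n k * γ n j * (γ n k * γ n j) = -1 := by
          calc γ n k * γ n j * (γ n k * γ n j) = γ n k * (γ n j * γ n k) * γ n j := by noncomm_ring
          _ = γ n k * (-(γ n k * γ n j)) * γ n j := by rw [gamma_anticomm hjk]
          _ = -(γ n k * γ n k * (γ n j * γ n j)) := by noncomm_ring
          _ = -1 := by rw [gamma_sq, gamma_sq, mul_one]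
        rw [this, Matrix.trace_neg, trace_one_pow]
      · rw [if_neg (fun hc => hja hc.1), if_neg (fun hc => hka hc.2)]
        have : γ n k * γ n j * (γ n a * γ n j) = -(γ n k * γ n a) := by
          calc γ n k * γ n j * (γ n a * γ n j) = γ n k * (γ n j * γ n a) * γ n j := by noncomm_ring
          _ = γ n k * (-(γ n a * γ n j)) * γ n j := by rw [gamma_anticomm hja]
          _ = -(γ n k * γ n a * (γ n j * γ n j)) := by noncomm_ring
          _ = -(γ n k * γ n a) := by rw [gamma_sq, mul_one]
        rw [this, Matrix.trace_neg, tr_two hka, neg_zero]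
    · rw [if_neg (fun hc => hja hc.1), if_neg (fun hc => hjb hc.1)]
      by_cases hka : k = a
      · subst hka
        have : γ n k * γ n j * (γ n k * γ n b) = -(γ n j * γ n b) := by
          calc γ n k * γ n j * (γ n k * γ n b) = γ n k * (γ n j * γ n k) * γ n b := by noncomm_ring
          _ = γ n k * (-(γ n k * γ n j)) * γ n b := by rw [gamma_anticomm hjk]
          _ = -(γ n k * γ n k * (γ n j * γ n b)) := by noncomm_ring
          _ = -(γ n j * γ n b) := by rw [gamma_sq, one_mul]
        rw [this, Matrix.trace_neg, tr_two hjb, neg_zero]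
      · by_cases hkb : k = b
        · subst hkb
          have : γ n k * γ n j * (γ n a * γ n k) = γ n j * γ n a := by
            calc γ n k * γ n j * (γ n a * γ n k)
                = γ n k * γ n j * (-(γ n k * γ n a)) := by
                  rw [gamma_anticomm (show a ≠ k from fun h => hka h.symm)]
            _ = -(γ n k * (γ n j * γ n k) * γ n a) := by noncomm_ring
            _ = -(γ n k * (-(γ n k * γ n j)) * γ n a) := by rw [gamma_anticomm hjk]
            _ = γ n k * γ n k * (γ n j * γ n a) := by noncomm_ring
            _ = γ n j * γ n a := by rw [gamma_sq, one_mul]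
          rw [this, tr_two hja]
        · have h4 : γ n k * γ n j * (γ n a * γ n b)
              = -(γ n b * (γ n k * γ n j * γ n a)) := by
            calc γ n k * γ n j * (γ n a * γ n b)
                = γ n k * γ n j * (-(γ n b * γ n a)) := by rw [gamma_anticomm hab]
            _ = -(γ n k * (γ n j * γ n b) * γ n a) := by noncomm_ring
            _ = -(γ n k * (-(γ n b * γ n j)) * γ n a) := by rw [gamma_anticomm hjb]
            _ = γ n k * γ n b * (γ n j * γ n a) := by noncomm_ring
            _ = -(γ n b * γ n k) * (γ n j * γ n a) := by rw [gamma_anticomm hkb]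
            _ = -(γ n b * (γ n k * γ n j * γ n a)) := by noncomm_ring
          have h5 : Matrix.trace (γ n k * γ n j * (γ n a * γ n b))
              = -(Matrix.trace (γ n k * γ n j * (γ n a * γ n b))) := by
            conv_lhs => rw [h4]
            rw [Matrix.trace_neg, Matrix.trace_mul_comm,
              show γ n k * γ n j * γ n a * γ n b = γ n k * γ n j * (γ n a * γ n b) from by
                noncomm_ring]
          rw [CharZero.eq_neg_self_iff.mp h5]

lemma gamma_car {n : ℕ} (j k : Fin (2 * n)) :
    γ n j * γ n k + γ n k * γ n j = (if j = k then (2 : ℂ) else 0) • 1 := by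
  by_cases h : j = k
  · subst h; rw [gamma_sq, if_pos rfl, two_smul]
  · rw [gamma_anticomm h, if_neg h, zero_smul, neg_add_cancel]

set_option maxHeartbeats 1000000 in
lemma quad_bracket {n : ℕ} (a b c d : Fin (2 * n)) :
    γ n a * γ n b * (γ n c * γ n d) - γ n c * γ n d * (γ n a * γ n b)
      = (if b = c then (2 : ℂ) else 0) • (γ n a * γ n d)
      - (if b = d then (2 : ℂ) else 0) • (γ n a * γ n c)
      + (if a = c then (2 : ℂ) else 0) • (γ n d * γ n b)
      - (if a = d then (2 : ℂ) else 0) • (γ n c * γ n b) := by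
  set A := γ n a; set B := γ n b; set C := γ n c; set D := γ n d
  have hBC : B * C = (if b = c then (2 : ℂ) else 0) • 1 - C * B :=
    eq_sub_of_add_eq (gamma_car b c)
  have hBD : B * D = (if b = d then (2 : ℂ) else 0) • 1 - D * B :=
    eq_sub_of_add_eq (gamma_car b d)
  have hAC : A * C = (if a = c then (2 : ℂ) else 0) • 1 - C * A :=
    eq_sub_of_add_eq (gamma_car a c)
  have hAD : A * D = (if a = d then (2 : ℂ) else 0) • 1 - D * A :=
    eq_sub_of_add_eq (gamma_car a d)
  have s1 : A * B * (C * D) = (if b = c then (2 : ℂ) else 0) • (A * D) - A * C * (B * D) := by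
    rw [show A * B * (C * D) = A * (B * C) * D from by simp only [mul_assoc], hBC]
    simp only [mul_sub, sub_mul, mul_smul_comm, smul_mul_assoc, mul_one, one_mul, mul_assoc]
  have s2 : A * C * (B * D) = (if b = d then (2 : ℂ) else 0) • (A * C) - A * C * (D * B) := by
    rw [hBD]
    simp only [mul_sub, mul_smul_comm, mul_one]
  have s3 : A * C * (D * B) = (if a = c then (2 : ℂ) else 0) • (D * B) - C * A * (D * B) := by
    rw [hAC]
    simp only [sub_mul, smul_mul_assoc, one_mul]
  have s4 : C * A * (D * B) = (if a = d then (2 : ℂ) else 0) • (C * B) - C * D * (A * B) := by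
    rw [show C * A * (D * B) = C * (A * D) * B from by simp only [mul_assoc], hAD]
    simp only [mul_sub, sub_mul, mul_smul_comm, smul_mul_assoc, mul_one, one_mul, mul_assoc]
  rw [s1, s2, s3, s4]
  abel

/-- `W a b = 2(E_ab - E_ba)` -/
def W {m : ℕ} (a b : Fin m) : Matrix (Fin m) (Fin m) ℂ :=
  (2 : ℂ) • (Matrix.single a b 1 - Matrix.single b a 1)

lemma W_apply {m : ℕ} (a b j k : Fin m) :
    W a b j k = (if a = j ∧ b = k then (2 : ℂ) else 0) - (if b = j ∧ a = k then 2 else 0) := by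
  simp only [W, Matrix.smul_apply, Matrix.sub_apply, Matrix.single, Matrix.of_apply,
    smul_eq_mul]
  split_ifs <;> ring

lemma E_mul {m : ℕ} (a b c d : Fin m) :
    Matrix.single a b (1 : ℂ) * Matrix.single c d 1 =
      if b = c then Matrix.single a d 1 else 0 := by
  by_cases h : b = c
  · subst h; rw [if_pos rfl, Matrix.single_mul_single_same, one_mul]
  · rw [if_neg h]
    exact Matrix.single_mul_single_of_ne (c := 1) a b c h 1

lemma W_bracket {m : ℕ} (a b c d : Fin m) :
    ⁅W a b, W c d⁆
      = (if b = c then (2 : ℂ) else 0) • W a d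
      - (if b = d then (2 : ℂ) else 0) • W a c
      + (if a = c then (2 : ℂ) else 0) • W d b
      - (if a = d then (2 : ℂ) else 0) • W c b := by
  simp only [Ring.lie_def, W, smul_sub, sub_mul, mul_sub, smul_mul_assoc, mul_smul_comm,
    E_mul, smul_smul]
  by_cases h1 : b = c <;> by_cases h2 : b = d <;> by_cases h3 : a = c <;> by_cases h4 : a = d <;>
    subst_vars <;> simp_all [eq_comm] <;> module

/-- The moment map realizing the Lie algebra isomorphism. -/
def Phi (n : ℕ) :
    Matrix (Fin n → Fin 2) (Fin n → Fin 2) ℂ →ₗ[ℂ] Matrix (Fin (2 * n)) (Fin (2 * n)) ℂ where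
  toFun X := Matrix.of fun j k =>
    if j = k then 0 else (2 / 2 ^ n : ℂ) * Matrix.trace (γ n k * γ n j * X)
  map_add' X Y := by
    ext j k
    simp only [Matrix.of_apply, Matrix.add_apply]
    split_ifs
    · ring
    · rw [mul_add, Matrix.trace_add, mul_add]
  map_smul' c X := by
    ext j k
    simp only [Matrix.of_apply, Matrix.smul_apply, RingHom.id_apply, smul_eq_mul]
    split_ifs
    · ring
    · rw [Matrix.mul_smul, Matrix.trace_smul, smul_eq_mul]; ring

lemma Phi_apply {n : ℕ} (X : Matrix (Fin n → Fin 2) (Fin n → Fin 2) ℂ) (j k : Fin (2 * n)) :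
    Phi n X j k = if j = k then 0 else (2 / 2 ^ n : ℂ) * Matrix.trace (γ n k * γ n j * X) := rfl

lemma Phi_gamma {n : ℕ} (a b : Fin (2 * n)) : Phi n (γ n a * γ n b) = W a b := by
  by_cases hab : a = b
  · subst hab
    ext j k
    rw [Phi_apply, W_apply, gamma_sq, mul_one]
    by_cases hjk : j = k
    · rw [if_pos hjk, sub_self]
    · rw [if_neg hjk, tr_two (fun h => hjk h.symm), mul_zero, sub_self]
  · have h2n : (2 : ℂ) ^ n ≠ 0 := pow_ne_zero n two_ne_zero
    ext j k
    rw [Phi_apply, W_apply]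
    by_cases hjk : j = k
    · rw [if_pos hjk]; subst hjk
      rw [if_neg (fun hc => hab (hc.1.trans hc.2.symm)),
        if_neg (fun hc => hab (hc.2.trans hc.1.symm)), sub_zero]
    · rw [if_neg hjk, trace_pairing hjk hab]
      simp only [@eq_comm _ a j, @eq_comm _ b k, @eq_comm _ b j, @eq_comm _ a k]
      split_ifs with hc1 hc2 hc2
      · exact absurd (hc1.1.symm.trans hc2.1) hab
      · field_simp; ring
      · field_simp; ring
      · ring

lemma Phi_antisym {n : ℕ} (X : Matrix (Fin n → Fin 2) (Fin n → Fin 2) ℂ) :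
    (Phi n X)ᵀ = -(Phi n X) := by
  ext j k
  rw [Matrix.transpose_apply, Matrix.neg_apply, Phi_apply, Phi_apply]
  by_cases hjk : j = k
  · subst hjk; simp
  · rw [if_neg (fun h => hjk h.symm), if_neg hjk, gamma_anticomm (fun h : j = k => hjk h)]
    rw [neg_mul, Matrix.trace_neg]
    ring

abbrev Idx (n : ℕ) := {p : Fin (2 * n) × Fin (2 * n) // p.1 < p.2}

abbrev genSet (n : ℕ) : Set (Matrix (Fin n → Fin 2) (Fin n → Fin 2) ℂ) :=
  {A | ∃ a b, a < b ∧ A = γ n a * γ n b}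

lemma sum_W_entry {n : ℕ} (c : Idx n → ℂ) (q : Idx n) :
    (∑ p : Idx n, c p • W p.1.1 p.1.2) q.1.1 q.1.2 = 2 * c q := by
  rw [Matrix.sum_apply, Finset.sum_eq_single_of_mem q (Finset.mem_univ _)]
  · rw [Matrix.smul_apply, W_apply, if_pos ⟨rfl, rfl⟩,
      if_neg (fun hc => absurd hc.2 (ne_of_lt q.2)), smul_eq_mul]
    ring
  · intro p _ hpq
    have hp : (p.1.1 : ℕ) < p.1.2 := p.2
    have hq : (q.1.1 : ℕ) < q.1.2 := q.2
    rw [Matrix.smul_apply, W_apply,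
      if_neg (fun hc => hpq (Subtype.ext (Prod.ext hc.1 hc.2))),
      if_neg (fun hc => by
        have e1 : (p.1.2 : ℕ) = q.1.1 := congrArg Fin.val hc.1
        have e2 : (p.1.1 : ℕ) = q.1.2 := congrArg Fin.val hc.2
        omega),
      sub_zero, smul_zero]

lemma sum_W_eq_zero {n : ℕ} (c : Idx n → ℂ)
    (h : ∑ p : Idx n, c p • W p.1.1 p.1.2 = 0) : ∀ q, c q = 0 := by
  intro q
  have h2 : (∑ p : Idx n, c p • W p.1.1 p.1.2) q.1.1 q.1.2 = 0 := by rw [h]; rfl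
  rw [sum_W_entry] at h2
  exact (mul_eq_zero.mp h2).resolve_left two_ne_zero

lemma sum_W_repr {n : ℕ} (A : Matrix (Fin (2 * n)) (Fin (2 * n)) ℂ) (hA : Aᵀ = -A) :
    ∑ p : Idx n, (A p.1.1 p.1.2 / 2) • W p.1.1 p.1.2 = A := by
  ext j k
  have hAjk : A k j = -A j k := by
    have := congrFun (congrFun hA j) k
    simpa [Matrix.transpose_apply, Matrix.neg_apply] using this
  rw [Matrix.sum_apply]
  rcases lt_trichotomy j k with h | h | h
  · rw [Finset.sum_eq_single_of_mem (⟨(j, k), h⟩ : Idx n) (Finset.mem_univ _)]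
    · rw [Matrix.smul_apply, W_apply, if_pos ⟨rfl, rfl⟩,
        if_neg (fun hc => absurd hc.2 (ne_of_lt h)), smul_eq_mul]
      ring
    · intro p _ hpq
      have hp : (p.1.1 : ℕ) < p.1.2 := p.2
      rw [Matrix.smul_apply, W_apply,
        if_neg (fun hc => hpq (Subtype.ext (Prod.ext hc.1 hc.2))),
        if_neg (fun hc => by
          have e1 : (p.1.2 : ℕ) = j := congrArg Fin.val hc.1
          have e2 : (p.1.1 : ℕ) = k := congrArg Fin.val hc.2
          have : (j : ℕ) < k := h
          omega),
        sub_zero, smul_zero]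
  · subst h
    rw [Finset.sum_eq_zero, CharZero.eq_neg_self_iff.mp hAjk]
    intro p _
    have hp : (p.1.1 : ℕ) < p.1.2 := p.2
    rw [Matrix.smul_apply, W_apply,
      if_neg (fun hc => by
        have e1 : (p.1.1 : ℕ) = j := congrArg Fin.val hc.1
        have e2 : (p.1.2 : ℕ) = j := congrArg Fin.val hc.2
        omega),
      if_neg (fun hc => by
        have e1 : (p.1.2 : ℕ) = j := congrArg Fin.val hc.1
        have e2 : (p.1.1 : ℕ) = j := congrArg Fin.val hc.2
        omega),
      sub_zero, smul_zero]
  · rw [Finset.sum_eq_single_of_mem (⟨(k, j), h⟩ : Idx n) (Finset.mem_univ _)]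
    · rw [Matrix.smul_apply, W_apply,
        if_neg (fun hc => absurd hc.1 (ne_of_lt h)), if_pos ⟨rfl, rfl⟩, smul_eq_mul, hAjk]
      ring
    · intro p _ hpq
      have hp : (p.1.1 : ℕ) < p.1.2 := p.2
      rw [Matrix.smul_apply, W_apply,
        if_neg (fun hc => by
          have e1 : (p.1.1 : ℕ) = j := congrArg Fin.val hc.1
          have e2 : (p.1.2 : ℕ) = k := congrArg Fin.val hc.2
          have : (k : ℕ) < j := h
          omega),
        if_neg (fun hc => hpq (Subtype.ext (Prod.ext hc.2 hc.1))),
        sub_zero, smul_zero]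

lemma mem_span_gen {n : ℕ} {x y : Fin (2 * n)} (h : x ≠ y) :
    γ n x * γ n y ∈ Submodule.span ℂ (genSet n) := by
  rcases lt_or_gt_of_ne h with h' | h'
  · exact Submodule.subset_span ⟨x, y, h', rfl⟩
  · rw [gamma_anticomm h]
    exact Submodule.neg_mem _ (Submodule.subset_span ⟨y, x, h', rfl⟩)

lemma smul_if_mem {n : ℕ} {x y : Fin (2 * n)} {P : Prop} [Decidable P] (h : P → x ≠ y) :
    (if P then (2 : ℂ) else 0) • (γ n x * γ n y) ∈ Submodule.span ℂ (genSet n) := by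
  by_cases hP : P
  · exact Submodule.smul_mem _ _ (mem_span_gen (h hP))
  · rw [if_neg hP, zero_smul]; exact Submodule.zero_mem _

lemma mlie_self {ι : Type*} [Fintype ι] [DecidableEq ι] (u : Matrix ι ι ℂ) :
    ⁅u, u⁆ = 0 := by
  rw [Ring.lie_def, sub_self]

lemma mzero_lie {ι : Type*} [Fintype ι] [DecidableEq ι] (u : Matrix ι ι ℂ) :
    ⁅(0 : Matrix ι ι ℂ), u⁆ = 0 := by
  rw [Ring.lie_def, zero_mul, mul_zero, sub_zero]

lemma mlie_zero {ι : Type*} [Fintype ι] [DecidableEq ι] (u : Matrix ι ι ℂ) :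
    ⁅u, (0 : Matrix ι ι ℂ)⁆ = 0 := by
  rw [Ring.lie_def, zero_mul, mul_zero, sub_zero]

lemma madd_lie {ι : Type*} [Fintype ι] [DecidableEq ι] (u v w : Matrix ι ι ℂ) :
    ⁅u + v, w⁆ = ⁅u, w⁆ + ⁅v, w⁆ := by
  simp only [Ring.lie_def]; noncomm_ring

lemma mlie_add {ι : Type*} [Fintype ι] [DecidableEq ι] (u v w : Matrix ι ι ℂ) :
    ⁅u, v + w⁆ = ⁅u, v⁆ + ⁅u, w⁆ := by
  simp only [Ring.lie_def]; noncomm_ring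

lemma msmul_lie {ι : Type*} [Fintype ι] [DecidableEq ι] (r : ℂ) (u v : Matrix ι ι ℂ) :
    ⁅r • u, v⁆ = r • ⁅u, v⁆ := by
  simp only [Ring.lie_def, smul_mul_assoc, mul_smul_comm, smul_sub]

lemma mlie_smul {ι : Type*} [Fintype ι] [DecidableEq ι] (r : ℂ) (u v : Matrix ι ι ℂ) :
    ⁅u, r • v⁆ = r • ⁅u, v⁆ := by
  simp only [Ring.lie_def, smul_mul_assoc, mul_smul_comm, smul_sub]

lemma bracket_gen_mem {n : ℕ} {a b c d : Fin (2 * n)} (hab : a < b) (hcd : c < d) :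
    ⁅γ n a * γ n b, γ n c * γ n d⁆ ∈ Submodule.span ℂ (genSet n) := by
  by_cases heq : a = c ∧ b = d
  · obtain ⟨rfl, rfl⟩ := heq
    rw [mlie_self]
    exact Submodule.zero_mem _
  · rw [Ring.lie_def, quad_bracket]
    have hab' : (a : ℕ) < b := hab
    have hcd' : (c : ℕ) < d := hcd
    refine Submodule.sub_mem _ (Submodule.add_mem _ (Submodule.sub_mem _ ?_ ?_) ?_) ?_
    · exact smul_if_mem fun h => by
        have := congrArg Fin.val h; exact fun h2 => by have := congrArg Fin.val h2; omega
    · exact smul_if_mem fun h h2 => heq ⟨h2, h⟩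
    · exact smul_if_mem fun h h2 => heq ⟨h, h2.symm⟩
    · exact smul_if_mem fun h => by
        have := congrArg Fin.val h; exact fun h2 => by have := congrArg Fin.val h2; omega

lemma bracket_mem_span {n : ℕ} :
    ∀ x ∈ Submodule.span ℂ (genSet n), ∀ y ∈ Submodule.span ℂ (genSet n),
      ⁅x, y⁆ ∈ Submodule.span ℂ (genSet n) := by
  intro x hx y hy
  induction hx, hy using Submodule.span_induction₂ with
  | mem_mem u v hu hv =>
    obtain ⟨a, b, hab, rfl⟩ := hu
    obtain ⟨c, d, hcd, rfl⟩ := hv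
    exact bracket_gen_mem hab hcd
  | zero_left v hv => rw [mzero_lie]; exact Submodule.zero_mem _
  | zero_right u hu => rw [mlie_zero]; exact Submodule.zero_mem _
  | add_left u v w hu hv hw h1 h2 => rw [madd_lie]; exact Submodule.add_mem _ h1 h2
  | add_right u v w hu hv hw h1 h2 => rw [mlie_add]; exact Submodule.add_mem _ h1 h2
  | smul_left r u v hu hv h1 => rw [msmul_lie]; exact Submodule.smul_mem _ _ h1
  | smul_right r u v hu hv h1 => rw [mlie_smul]; exact Submodule.smul_mem _ _ h1

lemma Phi_lie {n : ℕ} :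
    ∀ x ∈ Submodule.span ℂ (genSet n), ∀ y ∈ Submodule.span ℂ (genSet n),
      Phi n ⁅x, y⁆ = ⁅Phi n x, Phi n y⁆ := by
  intro x hx y hy
  induction hx, hy using Submodule.span_induction₂ with
  | mem_mem u v hu hv =>
    obtain ⟨a, b, hab, rfl⟩ := hu
    obtain ⟨c, d, hcd, rfl⟩ := hv
    rw [Phi_gamma, Phi_gamma, W_bracket, Ring.lie_def, quad_bracket]
    rw [map_sub, map_add, map_sub, map_smul, map_smul, map_smul, map_smul,
      Phi_gamma, Phi_gamma, Phi_gamma, Phi_gamma]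
  | zero_left v hv => simp [mzero_lie]
  | zero_right u hu => simp [mlie_zero]
  | add_left u v w hu hv hw h1 h2 => rw [madd_lie, map_add, map_add, h1, h2, madd_lie]
  | add_right u v w hu hv hw h1 h2 => rw [mlie_add, map_add, map_add, h1, h2, mlie_add]
  | smul_left r u v hu hv h1 => rw [msmul_lie, map_smul, map_smul, h1, msmul_lie]
  | smul_right r u v hu hv h1 => rw [mlie_smul, map_smul, map_smul, h1, mlie_smul]

end
end DG

open DG in
/-- the quadratic monomials `γ_aγ_b` (`a < b`) are linearly independent,
their span is a Lie subalgebra of the matrices under the commutator bracket, and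
`γ_aγ_b ↦ 2(E_{ab} − E_{ba})` determines a Lie algebra isomorphism onto the
antisymmetric complex `2n × 2n` matrices. -/
theorem statement1 (n : ℕ) (hn : 1 ≤ n) :
    LinearIndependent ℂ
      (fun p : {p : Fin (2 * n) × Fin (2 * n) // p.1 < p.2} => γ n p.1.1 * γ n p.1.2) ∧
    (∀ x ∈ Submodule.span ℂ
        {A : Matrix (Fin n → Fin 2) (Fin n → Fin 2) ℂ | ∃ a b, a < b ∧ A = γ n a * γ n b},
      ∀ y ∈ Submodule.span ℂ
        {A : Matrix (Fin n → Fin 2) (Fin n → Fin 2) ℂ | ∃ a b, a < b ∧ A = γ n a * γ n b},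
        ⁅x, y⁆ ∈ Submodule.span ℂ
          {A : Matrix (Fin n → Fin 2) (Fin n → Fin 2) ℂ | ∃ a b, a < b ∧ A = γ n a * γ n b}) ∧
    ∃ φ : ↥(Submodule.span ℂ
            {A : Matrix (Fin n → Fin 2) (Fin n → Fin 2) ℂ | ∃ a b, a < b ∧ A = γ n a * γ n b})
          →ₗ[ℂ] Matrix (Fin (2 * n)) (Fin (2 * n)) ℂ,
      (∀ (a b : Fin (2 * n)) (_ : a < b)
          (hmem : γ n a * γ n b ∈ Submodule.span ℂ
            {A : Matrix (Fin n → Fin 2) (Fin n → Fin 2) ℂ | ∃ a b, a < b ∧ A = γ n a * γ n b}),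
        φ ⟨γ n a * γ n b, hmem⟩ =
          (2 : ℂ) • (Matrix.single a b 1 - Matrix.single b a 1)) ∧
      Function.Injective φ ∧
      (∀ A : Matrix (Fin (2 * n)) (Fin (2 * n)) ℂ, Aᵀ = -A ↔ A ∈ Set.range φ) ∧
      (∀ (x y : ↥(Submodule.span ℂ
            {A : Matrix (Fin n → Fin 2) (Fin n → Fin 2) ℂ | ∃ a b, a < b ∧ A = γ n a * γ n b}))
          (hxy : ⁅(x : Matrix (Fin n → Fin 2) (Fin n → Fin 2) ℂ), (y : Matrix (Fin n → Fin 2) (Fin n → Fin 2) ℂ)⁆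
              ∈ Submodule.span ℂ
            {A : Matrix (Fin n → Fin 2) (Fin n → Fin 2) ℂ | ∃ a b, a < b ∧ A = γ n a * γ n b}),
        φ ⟨⁅(x : Matrix (Fin n → Fin 2) (Fin n → Fin 2) ℂ), (y : Matrix (Fin n → Fin 2) (Fin n → Fin 2) ℂ)⁆, hxy⟩
          = ⁅φ x, φ y⁆) := by
  constructor
  · rw [Fintype.linearIndependent_iff]
    intro g hg q
    have h0 : Phi n (∑ p : Idx n, g p • (γ n p.1.1 * γ n p.1.2)) = 0 := by
      rw [hg, map_zero]
    rw [map_sum] at h0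
    simp_rw [map_smul, Phi_gamma] at h0
    exact sum_W_eq_zero g h0 q
  refine ⟨bracket_mem_span, (Phi n).comp (Submodule.span ℂ (genSet n)).subtype,
    ?_, ?_, ?_, ?_⟩
  · intro a b hab hmem
    show Phi n (γ n a * γ n b) = _
    rw [Phi_gamma a b]
    rfl
  · intro x y hxy
    have hxy' : Phi n ((x : Matrix (Fin n → Fin 2) (Fin n → Fin 2) ℂ) - y) = 0 := by
      rw [map_sub]
      have h : Phi n (x : Matrix (Fin n → Fin 2) (Fin n → Fin 2) ℂ)
          = Phi n (y : Matrix (Fin n → Fin 2) (Fin n → Fin 2) ℂ) := hxy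
      rw [h, sub_self]
    have hsub : ((x : Matrix (Fin n → Fin 2) (Fin n → Fin 2) ℂ) - y)
        ∈ Submodule.span ℂ (genSet n) := Submodule.sub_mem _ x.2 y.2
    rw [show genSet n = Set.range (fun p : Idx n => γ n p.1.1 * γ n p.1.2) from
      Set.ext fun A => ⟨fun ⟨a, b, h, hA⟩ => ⟨⟨(a, b), h⟩, hA.symm⟩,
        fun ⟨p, hp⟩ => ⟨p.1.1, p.1.2, p.2, hp.symm⟩⟩,
      Submodule.mem_span_range_iff_exists_fun] at hsub
    obtain ⟨c, hc⟩ := hsub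
    rw [← hc, map_sum] at hxy'
    simp_rw [map_smul, Phi_gamma] at hxy'
    have hc0 := sum_W_eq_zero c hxy'
    have hz : (x : Matrix (Fin n → Fin 2) (Fin n → Fin 2) ℂ) - y = 0 := by
      rw [← hc]
      exact Finset.sum_eq_zero fun p _ => by rw [hc0, zero_smul]
    exact Subtype.ext (sub_eq_zero.mp hz)
  · intro A
    constructor
    · intro hA
      refine ⟨⟨∑ p : Idx n, (A p.1.1 p.1.2 / 2) • (γ n p.1.1 * γ n p.1.2),
        Submodule.sum_mem _ fun p _ => Submodule.smul_mem _ _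
          (Submodule.subset_span ⟨p.1.1, p.1.2, p.2, rfl⟩)⟩, ?_⟩
      show Phi n (∑ p : Idx n, (A p.1.1 p.1.2 / 2) • (γ n p.1.1 * γ n p.1.2)) = A
      rw [map_sum]
      simp_rw [map_smul, Phi_gamma]
      exact sum_W_repr A hA
    · rintro ⟨x, rfl⟩
      exact Phi_antisym _
  · intro x y hxy
    exact Phi_lie _ x.2 _ y.2
end

section
/- Let A be a complex antisymmetric 2n×2n matrix and R ∈ SO(2n,ℝ). Then for every increasing tuple K ⊆ {1,…,2n} of size 2m: Pf((R A Rᵀ)|_K) = Σ_J Pf(A|_J) · det(R[K,J]), where the sum is over all increasing tuples J ⊆ {1,…,2n} of size 2m and R[K,J] denotes the 2m×2m submatrix (R_{K_a, J_b})_{a,b}. -/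
open scoped Matrix ComplexOrder

namespace PfCB
open Finset Equiv

noncomputable section
variable {k N : ℕ}

def sgn {k : ℕ} (σ : Equiv.Perm (Fin k)) : ℂ := (Equiv.Perm.sign σ : ℂ)

def p2 {k : ℕ} (l : Fin (k/2)) : Fin k := ⟨2*l.val, by have := l.isLt; omega⟩
def p2' {k : ℕ} (l : Fin (k/2)) : Fin k := ⟨2*l.val+1, by have := l.isLt; omega⟩

lemma sgn_mul (π σ : Equiv.Perm (Fin k)) : sgn (π * σ) = sgn π * sgn σ := by
  simp [sgn]

lemma sgn_sq (π : Equiv.Perm (Fin k)) : sgn π * sgn π = 1 := by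
  rcases Int.isUnit_iff.mp (Equiv.Perm.sign π).isUnit with h | h <;> simp [sgn, h]

def pairE (hk : k % 2 = 0) : Fin (k/2) × Fin 2 ≃ Fin k where
  toFun := fun p => ⟨2 * p.1.val + p.2.val, by have := p.1.isLt; have := p.2.isLt; omega⟩
  invFun := fun a => (⟨a.val / 2, by have := a.isLt; omega⟩, ⟨a.val % 2, by omega⟩)
  left_inv := by
    rintro ⟨l, i⟩
    have h1 := l.isLt; have h2 := i.isLt
    have : (2 * l.val + i.val) / 2 = l.val := by omega
    have h4 : (2 * l.val + i.val) % 2 = i.val := by omega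
    simp [Prod.ext_iff, Fin.ext_iff, this, h4]
  right_inv := fun a => by
    have := a.isLt
    apply Fin.ext
    simp; omega

lemma prod_split (hk : k % 2 = 0) (h : Fin k → ℂ) :
    ∏ a, h a = ∏ l : Fin (k/2), (h (p2 l) * h (p2' l)) := by
  rw [← Equiv.prod_comp (pairE hk) h, Fintype.prod_prod_type]
  refine Finset.prod_congr rfl fun l _ => ?_
  rw [Fin.prod_univ_two]
  congr 1 <;> exact congrArg h (Fin.ext (by simp [pairE, p2, p2']))

def funsE (hk : k % 2 = 0) : (Fin k → Fin N) ≃ (Fin (k/2) → Fin N × Fin N) where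
  toFun := fun g l => (g (p2 l), g (p2' l))
  invFun := fun φ a =>
    if a.val % 2 = 0 then (φ ⟨a.val/2, by have := a.isLt; omega⟩).1
    else (φ ⟨a.val/2, by have := a.isLt; omega⟩).2
  left_inv := by
    intro g; funext a
    by_cases h : a.val % 2 = 0
    · simp only [h, if_pos]
      exact congrArg g (Fin.ext (by simp only [p2, Fin.val_mk]; omega))
    · simp only [h, if_neg, ite_false]
      exact congrArg g (Fin.ext (by simp only [p2', Fin.val_mk]; omega))
  right_inv := by
    intro φ; funext l
    have h1 : (p2 (k := k) l).val % 2 = 0 := by simp only [p2, Fin.val_mk]; omega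
    have h2 : ¬ ((p2' (k := k) l).val % 2 = 0) := by simp only [p2', Fin.val_mk]; omega
    simp only [h1, if_pos, h2, if_neg, ite_false]
    have key : ∀ (x y : Fin (k/2)), x = l → y = l → ((φ x).1, (φ y).2) = φ l := by
      rintro x y rfl rfl; rfl
    exact key _ _ (Fin.ext (by simp only [p2, Fin.val_mk]; omega))
      (Fin.ext (by simp only [p2', Fin.val_mk]; omega))

def T {N k : ℕ} (A : Matrix (Fin N) (Fin N) ℂ) (g : Fin k → Fin N) : ℂ :=
  ∑ σ : Equiv.Perm (Fin k), sgn σ * ∏ l : Fin (k/2), A (g (σ (p2 l))) (g (σ (p2' l)))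

lemma T_comp (A : Matrix (Fin N) (Fin N) ℂ) (g : Fin k → Fin N) (π : Equiv.Perm (Fin k)) :
    T A (g ∘ π) = sgn π * T A g := by
  unfold T
  rw [Finset.mul_sum,
    ← Equiv.sum_comp (Equiv.mulLeft π)
      (fun τ => sgn π * (sgn τ * ∏ l, A (g (τ (p2 l))) (g (τ (p2' l)))))]
  refine Finset.sum_congr rfl fun σ _ => ?_
  simp only [Equiv.coe_mulLeft]
  have h1 : sgn π * sgn (π * σ) = sgn σ := by
    rw [sgn_mul, ← mul_assoc, sgn_sq, one_mul]
  rw [← mul_assoc, h1]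
  rfl

lemma T_noninj (A : Matrix (Fin N) (Fin N) ℂ) {g : Fin k → Fin N}
    (hg : ¬ Function.Injective g) : T A g = 0 := by
  obtain ⟨a, b, hgab, hab⟩ : ∃ a b, g a = g b ∧ a ≠ b := by
    simpa [Function.Injective] using hg
  set τ := Equiv.swap a b with hτ
  have hginv : ∀ x, g (τ x) = g x := by
    intro x
    rcases eq_or_ne x a with rfl | hxa
    · rw [hτ, Equiv.swap_apply_left]; exact hgab.symm
    rcases eq_or_ne x b with rfl | hxb
    · rw [hτ, Equiv.swap_apply_right]; exact hgab
    · rw [hτ, Equiv.swap_apply_of_ne_of_ne hxa hxb]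
  have hsτ : sgn τ = -1 := by
    simp [sgn, hτ, Equiv.Perm.sign_swap hab]
  have key : T A g = - T A g := by
    conv_lhs => rw [T,
      ← Equiv.sum_comp (Equiv.mulLeft τ)
        (fun σ => sgn σ * ∏ l, A (g (σ (p2 l))) (g (σ (p2' l))))]
    rw [T, ← Finset.sum_neg_distrib]
    refine Finset.sum_congr rfl fun σ _ => ?_
    simp only [Equiv.coe_mulLeft]
    have hprod : ∀ l : Fin (k/2), A (g ((τ * σ) (p2 l))) (g ((τ * σ) (p2' l)))
        = A (g (σ (p2 l))) (g (σ (p2' l))) := by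
      intro l
      have e1 : g ((τ * σ) (p2 l)) = g (σ (p2 l)) := hginv _
      have e2 : g ((τ * σ) (p2' l)) = g (σ (p2' l)) := hginv _
      rw [e1, e2]
    rw [Finset.prod_congr rfl (fun l _ => hprod l), sgn_mul, hsτ]
    ring
  have h2 : (2:ℂ) * T A g = 0 := by linear_combination key
  exact (mul_eq_zero.mp h2).resolve_left two_ne_zero

lemma T_emb (A : Matrix (Fin N) (Fin N) ℂ) (J : Finset (Fin N)) {k : ℕ}
    (hJ : J.card = k) (hk : k % 2 = 0) :
    T A (⇑(J.orderEmbOfFin hJ)) =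
      ((2:ℂ)^(k/2) * ((k/2).factorial : ℂ)) * DG.pf (DG.restr A J) := by
  subst hJ
  have hc : ((2:ℂ)^(J.card/2) * ((J.card/2).factorial : ℂ)) ≠ 0 :=
    mul_ne_zero (pow_ne_zero _ two_ne_zero)
      (Nat.cast_ne_zero.mpr (Nat.factorial_ne_zero _))
  unfold DG.pf
  rw [dif_pos hk, ← mul_assoc, mul_inv_cancel₀ hc, one_mul]
  rfl

def preE {k N : ℕ} (σ : Equiv.Perm (Fin k)) : (Fin k → Fin N) ≃ (Fin k → Fin N) :=
  ⟨fun g => g ∘ σ, fun g => g ∘ σ.symm,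
   fun g => by funext a; simp, fun g => by funext a; simp⟩

lemma entry_mul (S : Matrix (Fin k) (Fin N) ℂ) (A : Matrix (Fin N) (Fin N) ℂ)
    (a b : Fin k) : (S * A * Sᵀ) a b = ∑ j, ∑ j', S a j * A j j' * S b j' := by
  simp only [Matrix.mul_apply, Matrix.transpose_apply, Finset.sum_mul]
  exact Finset.sum_comm

lemma pf_cb {N k : ℕ} (hk : k % 2 = 0) (S : Matrix (Fin k) (Fin N) ℂ)
    (A : Matrix (Fin N) (Fin N) ℂ) :
    DG.pf (S * A * Sᵀ) = ∑ J : {J : Finset (Fin N) // J.card = k},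
      DG.pf (DG.restr A J.1) * (S.submatrix id ⇑(J.1.orderEmbOfFin J.2)).det := by
  classical
  have prodentry : ∀ σ : Equiv.Perm (Fin k),
      ∏ l : Fin (k/2), (S * A * Sᵀ) (σ (p2 l)) (σ (p2' l)) =
      ∑ g : Fin k → Fin N,
        (∏ a, S (σ a) (g a)) * ∏ l : Fin (k/2), A (g (p2 l)) (g (p2' l)) := by
    intro σ
    have e1 : ∀ l : Fin (k/2), (S * A * Sᵀ) (σ (p2 l)) (σ (p2' l)) =
        ∑ p : Fin N × Fin N, S (σ (p2 l)) p.1 * A p.1 p.2 * S (σ (p2' l)) p.2 := by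
      intro l
      rw [entry_mul]
      exact (Fintype.sum_prod_type (fun p : Fin N × Fin N =>
        S (σ (p2 l)) p.1 * A p.1 p.2 * S (σ (p2' l)) p.2)).symm
    rw [Finset.prod_congr rfl fun l _ => e1 l, Finset.prod_univ_sum,
      Fintype.piFinset_univ,
      ← Equiv.sum_comp (funsE hk) (fun φ => ∏ l : Fin (k/2),
        S (σ (p2 l)) (φ l).1 * A (φ l).1 (φ l).2 * S (σ (p2' l)) (φ l).2)]
    refine Finset.sum_congr rfl fun g _ => ?_
    show ∏ l : Fin (k/2), S (σ (p2 l)) (g (p2 l)) * A (g (p2 l)) (g (p2' l))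
        * S (σ (p2' l)) (g (p2' l)) = _
    rw [Finset.prod_congr rfl (fun l _ => by
      show _ = (S (σ (p2 l)) (g (p2 l)) * S (σ (p2' l)) (g (p2' l)))
        * A (g (p2 l)) (g (p2' l))
      ring), Finset.prod_mul_distrib, ← prod_split hk (fun a => S (σ a) (g a))]
  have perσ : ∀ σ : Equiv.Perm (Fin k),
      sgn σ * ∏ l : Fin (k/2), (S * A * Sᵀ) (σ (p2 l)) (σ (p2' l)) =
      ∑ g : Fin k → Fin N, sgn σ * ((∏ a, S a (g a)) *
        ∏ l : Fin (k/2), A (g (σ (p2 l))) (g (σ (p2' l)))) := by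
    intro σ
    rw [prodentry σ, Finset.mul_sum]
    have key : ∀ g : Fin k → Fin N,
        sgn σ * ((∏ a, S a (g a)) * ∏ l : Fin (k/2), A (g (σ (p2 l))) (g (σ (p2' l))))
        = sgn σ * ((∏ a, S (σ a) ((preE σ g) a)) *
            ∏ l : Fin (k/2), A ((preE σ g) (p2 l)) ((preE σ g) (p2' l))) := by
      intro g
      have h1 : ∏ a, S (σ a) (g (σ a)) = ∏ a, S a (g a) :=
        Equiv.prod_comp σ (fun x => S x (g x))
      show _ = sgn σ * ((∏ a, S (σ a) (g (σ a))) * ∏ l : Fin (k/2),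
        A (g (σ (p2 l))) (g (σ (p2' l))))
      rw [h1]
    calc ∑ g : Fin k → Fin N, sgn σ * ((∏ a, S (σ a) (g a)) *
          ∏ l : Fin (k/2), A (g (p2 l)) (g (p2' l)))
        = ∑ g : Fin k → Fin N, sgn σ * ((∏ a, S (σ a) ((preE σ g) a)) *
          ∏ l : Fin (k/2), A ((preE σ g) (p2 l)) ((preE σ g) (p2' l))) :=
          (Equiv.sum_comp (preE σ) (fun g => sgn σ * ((∏ a, S (σ a) (g a)) *
            ∏ l : Fin (k/2), A (g (p2 l)) (g (p2' l))))).symm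
      _ = ∑ g : Fin k → Fin N, sgn σ * ((∏ a, S a (g a)) *
          ∏ l : Fin (k/2), A (g (σ (p2 l))) (g (σ (p2' l)))) :=
          Finset.sum_congr rfl fun g _ => (key g).symm
  have main : ∑ σ : Equiv.Perm (Fin k), sgn σ *
        ∏ l : Fin (k/2), (S * A * Sᵀ) (σ (p2 l)) (σ (p2' l))
      = ∑ g : Fin k → Fin N, (∏ a, S a (g a)) * T A g := by
    rw [Finset.sum_congr rfl fun σ _ => perσ σ, Finset.sum_comm]
    refine Finset.sum_congr rfl fun g _ => ?_
    rw [T, Finset.mul_sum]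
    exact Finset.sum_congr rfl fun σ _ => by ring
  unfold DG.pf
  rw [dif_pos hk]
  set c : ℂ := (2:ℂ)^(k/2) * ((k/2).factorial : ℂ) with hc_def
  have hc : c ≠ 0 := by
    rw [hc_def]
    exact mul_ne_zero (pow_ne_zero _ two_ne_zero)
      (Nat.cast_ne_zero.mpr (Nat.factorial_ne_zero _))
  have vanish : ∑ g : Fin k → Fin N, (∏ a, S a (g a)) * T A g
      = ∑ g ∈ Finset.univ.filter (fun g : Fin k → Fin N => Function.Injective g),
          (∏ a, S a (g a)) * T A g := by
    symm
    apply Finset.sum_subset (Finset.filter_subset _ _)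
    intro g _ hg
    rw [T_noninj A (by simpa using hg), mul_zero]
  have bij : ∑ g ∈ Finset.univ.filter (fun g : Fin k → Fin N => Function.Injective g),
          (∏ a, S a (g a)) * T A g
      = ∑ p : {J : Finset (Fin N) // J.card = k} × Equiv.Perm (Fin k),
          (∏ a, S a ((p.1.1.orderEmbOfFin p.1.2) (p.2 a))) *
            T A (⇑(p.1.1.orderEmbOfFin p.1.2) ∘ ⇑p.2) := by
    symm
    refine Finset.sum_bij (fun p _ => ⇑(p.1.1.orderEmbOfFin p.1.2) ∘ ⇑p.2) ?_ ?_ ?_ ?_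
    · intro p _
      simp only [Finset.mem_filter, Finset.mem_univ, true_and]
      exact (p.1.1.orderEmbOfFin p.1.2).injective.comp p.2.injective
    · rintro ⟨⟨s1, h1⟩, π1⟩ _ ⟨⟨s2, h2⟩, π2⟩ _ h
      have h' : ⇑(s1.orderEmbOfFin h1) ∘ ⇑π1 = ⇑(s2.orderEmbOfFin h2) ∘ ⇑π2 := h
      have him : ∀ (s : Finset (Fin N)) (hs : s.card = k) (π : Equiv.Perm (Fin k)),
          Finset.image (⇑(s.orderEmbOfFin hs) ∘ ⇑π) Finset.univ = s := by
        intro s hs π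
        apply Finset.eq_of_subset_of_card_le
        · intro x hx
          obtain ⟨a, _, rfl⟩ := Finset.mem_image.mp hx
          exact Finset.orderEmbOfFin_mem s hs _
        · rw [Finset.card_image_of_injective _
            ((s.orderEmbOfFin hs).injective.comp π.injective), Finset.card_univ,
            Fintype.card_fin, hs]
      have hs12 : s1 = s2 := by rw [← him s1 h1 π1, ← him s2 h2 π2, h']
      subst hs12
      have hπ : π1 = π2 := by
        apply Equiv.ext; intro a
        exact (s1.orderEmbOfFin h1).injective (congrFun h' a)
      subst hπ; rfl
    · intro g hg
      have hginj : Function.Injective g := by simpa using hg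
      have hcard : (Finset.image g Finset.univ).card = k := by
        rw [Finset.card_image_of_injective _ hginj, Finset.card_univ, Fintype.card_fin]
      have hmem : ∀ a, g a ∈ Finset.image g Finset.univ :=
        fun a => Finset.mem_image_of_mem g (Finset.mem_univ a)
      set J : {J : Finset (Fin N) // J.card = k} := ⟨Finset.image g Finset.univ, hcard⟩
        with hJdef
      set p0 : Fin k → Fin k := fun a => (J.1.orderIsoOfFin J.2).symm ⟨g a, hmem a⟩
        with hp0
      have hp0inj : Function.Injective p0 := by
        intro x y hxy
        apply hginj
        have h2 := congrArg (fun z => ((J.1.orderIsoOfFin J.2) z : Fin N)) hxy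
        simpa [hp0] using h2
      refine ⟨(J, Equiv.ofBijective p0 (Finite.injective_iff_bijective.mp hp0inj)),
        Finset.mem_univ _, ?_⟩
      funext a
      show (J.1.orderEmbOfFin J.2) (p0 a) = g a
      rw [hp0, ← Finset.coe_orderIsoOfFin_apply, OrderIso.apply_symm_apply]
    · intro p _; rfl
  have inner : ∀ J : {J : Finset (Fin N) // J.card = k},
      ∑ π : Equiv.Perm (Fin k),
        (∏ a, S a ((J.1.orderEmbOfFin J.2) (π a))) *
          T A (⇑(J.1.orderEmbOfFin J.2) ∘ ⇑π)
      = c * (DG.pf (DG.restr A J.1) * (S.submatrix id ⇑(J.1.orderEmbOfFin J.2)).det) := by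
    intro J
    have hdet : (S.submatrix id ⇑(J.1.orderEmbOfFin J.2)).det
        = ∑ π : Equiv.Perm (Fin k), sgn π * ∏ a, S a ((J.1.orderEmbOfFin J.2) (π a)) := by
      rw [← Matrix.det_transpose, Matrix.det_apply']
      rfl
    rw [hdet, Finset.mul_sum, Finset.mul_sum]
    refine Finset.sum_congr rfl fun π _ => ?_
    rw [T_comp, T_emb A J.1 J.2 hk, hc_def]
    ring
  calc c⁻¹ * ∑ σ : Equiv.Perm (Fin k), sgn σ *
        ∏ l : Fin (k/2), (S * A * Sᵀ) (σ (p2 l)) (σ (p2' l))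
      = c⁻¹ * ∑ g : Fin k → Fin N, (∏ a, S a (g a)) * T A g := by rw [main]
    _ = c⁻¹ * ∑ p : {J : Finset (Fin N) // J.card = k} × Equiv.Perm (Fin k),
          (∏ a, S a ((p.1.1.orderEmbOfFin p.1.2) (p.2 a))) *
            T A (⇑(p.1.1.orderEmbOfFin p.1.2) ∘ ⇑p.2) := by rw [vanish, bij]
    _ = c⁻¹ * ∑ J : {J : Finset (Fin N) // J.card = k},
          c * (DG.pf (DG.restr A J.1) * (S.submatrix id ⇑(J.1.orderEmbOfFin J.2)).det) := by
        rw [Fintype.sum_prod_type]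
        exact congrArg _ (Finset.sum_congr rfl fun J _ => inner J)
    _ = ∑ J : {J : Finset (Fin N) // J.card = k},
          DG.pf (DG.restr A J.1) * (S.submatrix id ⇑(J.1.orderEmbOfFin J.2)).det := by
        rw [← Finset.mul_sum, ← mul_assoc, inv_mul_cancel₀ hc, one_mul]


end
end PfCB

open DG in
/-- Pfaffian rotation identity. For `A` complex antisymmetric and
`R ∈ SO(2n,ℝ)`, for every `K` of size `2m`:
`Pf((RARᵀ)|_K) = Σ_J Pf(A|_J) · det(R[K,J])` over all `J` of size `2m`. -/
theorem statement6 (n m : ℕ)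
    (A : Matrix (Fin (2 * n)) (Fin (2 * n)) ℂ) (hA : Aᵀ = -A)
    (R : Matrix (Fin (2 * n)) (Fin (2 * n)) ℝ) (hR : R * Rᵀ = 1) (hRdet : R.det = 1)
    (K : Finset (Fin (2 * n))) (hK : K.card = 2 * m) :
    pf (restr ((R.map Complex.ofReal) * A * (R.map Complex.ofReal)ᵀ) K) =
      ∑ J : {J : Finset (Fin (2 * n)) // J.card = K.card},
        pf (restr A J.1) *
          ((R.map Complex.ofReal).submatrix (K.orderEmbOfFin rfl) (J.1.orderEmbOfFin J.2)).det := by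
  classical
  have hk2 : K.card % 2 = 0 := by omega
  have hrestr : DG.restr ((R.map Complex.ofReal) * A * (R.map Complex.ofReal)ᵀ) K
      = ((R.map Complex.ofReal).submatrix (⇑(K.orderEmbOfFin rfl)) id) * A *
        ((R.map Complex.ofReal).submatrix (⇑(K.orderEmbOfFin rfl)) id)ᵀ := by
    ext a b
    simp [DG.restr, Matrix.mul_apply, Matrix.submatrix_apply, Matrix.transpose_apply]
  rw [hrestr, PfCB.pf_cb hk2]
  rfl
end
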